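/- Let n = 2n' be even. In MHRG(2,2n'), T(Y_{2,2n'}) = F(Y_{2,2n'}) ∖ {(λ₁',λ₂') ∈ F(Y_{2,2n'}) : λ₁' + λ₂' = 2n'}. Moreover, for Y = (λ₁,λ₂) ∈ F(Y_{2,2n'}), setting OH(Y) := {(λ₁',λ₂) : λ₂ ≤ λ₁' < λ₁} ∪ {(λ₁,λ₂') : 0 ≤ λ₂' < λ₂} ∪ {(λ₂−1,λ₁') : 0 ≤ λ₁' < λ₂}: (1) if λ₁ + λ₂ < 2n', then O(Y) = OH(Y); (2) if λ₁ + λ₂ > 2n', then O(Y) = (OH(Y) ∖ {(λ₁',λ₂') : λ₁' + λ₂' = 2n'}) ∪ {(2n'−λ₂, 2n'−λ₁)}. -/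

import Mathlib

open Finset

/-- The rectangular Young diagram `Y_{m,n}` (boxes are 1-based pairs `(i,j)`). -/
def rect (m n : ℕ) : Finset (ℕ × ℕ) := Finset.Icc 1 m ×ˢ Finset.Icc 1 n

/-- `Y` is a Young diagram: a finite set of 1-based boxes, downward closed. -/
def IsYD (Y : Finset (ℕ × ℕ)) : Prop :=
  (∀ p ∈ Y, 1 ≤ p.1 ∧ 1 ≤ p.2) ∧
  (∀ p ∈ Y, ∀ q : ℕ × ℕ, 1 ≤ q.1 → 1 ≤ q.2 → q.1 ≤ p.1 → q.2 ≤ p.2 → q ∈ Y)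

/-- `d_k(Y)`: the number of boxes of `Y` on the `k`-th diagonal `j - i = k`. -/
def dk (Y : Finset (ℕ × ℕ)) (k : ℤ) : ℤ :=
  ((Y.filter fun p => (p.2 : ℤ) - (p.1 : ℤ) = k).card : ℤ)

/-- The set `D_{m,n}` of diagonal sequences: non-negative, vanishing outside
`(-m, n)`, and satisfying the adjacency condition. -/
def Dseq (m n : ℕ) (a : ℤ → ℤ) : Prop :=
  (∀ k : ℤ, 0 ≤ a k) ∧
  (∀ k : ℤ, k ≤ -(m : ℤ) → a k = 0) ∧
  (∀ k : ℤ, (n : ℤ) ≤ k → a k = 0) ∧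
  (∀ i : ℤ, -(m : ℤ) < i → i ≤ 0 → a (i - 1) ≤ a i ∧ a i ≤ a (i - 1) + 1) ∧
  (∀ i : ℤ, 0 < i → i ≤ (n : ℤ) → a i ≤ a (i - 1) ∧ a (i - 1) ≤ a i + 1)

/-- `a_{[l,r]}`: subtract `1` from the components indexed by `l ≤ k ≤ r`. -/
def cut (a : ℤ → ℤ) (l r : ℤ) : ℤ → ℤ := fun k => if l ≤ k ∧ k ≤ r then a k - 1 else a k

/-- The pair `(x,y)` sitting at positions `(k-1,k)` satisfies the adjacency condition. -/
def adjPair (k x y : ℤ) : Prop := if k ≤ 0 then x ≤ y ∧ y ≤ x + 1 else y ≤ x ∧ x ≤ y + 1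

/-- `(a_{k-1}, a_k)` is a left bulge, `a_{k-1} ↘ a_k`. -/
def leftBulge (a : ℤ → ℤ) (k : ℤ) : Prop :=
  adjPair k (a (k - 1)) (a k) ∧ adjPair k (a (k - 1) - 1) (a k)

/-- `(a_{k-1}, a_k)` is a right bulge, `a_{k-1} ↗ a_k`. -/
def rightBulge (a : ℤ → ℤ) (k : ℤ) : Prop :=
  adjPair k (a (k - 1)) (a k) ∧ adjPair k (a (k - 1)) (a k - 1)

/-- The map `E` duplicating the `c`-th component of a sequence. -/
def Emap (c : ℤ) (a : ℤ → ℤ) : ℤ → ℤ := fun k => if k ≤ c then a k else a (k - 1)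

def el (c k : ℤ) : ℤ := if k ≤ c then k else k + 1

def er (c k : ℤ) : ℤ := if k < c then k else k + 1

/-- The unimodal numbering `α_{m,n}(i,j) = min (j-i+m) (i-j+n)`. -/
def unimodal (m n : ℕ) (p : ℕ × ℕ) : ℤ :=
  min ((p.2 : ℤ) - (p.1 : ℤ) + m) ((p.1 : ℤ) - (p.2 : ℤ) + n)

/-- `A(X)`: the multiset of unimodal numbers of the boxes of `X`. -/
def Amul (m n : ℕ) (X : Finset (ℕ × ℕ)) : Multiset ℤ := X.val.map (unimodal m n)

/-- The hook of the box `(i,j)` in `Y`. -/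
def hook (Y : Finset (ℕ × ℕ)) (i j : ℕ) : Finset (ℕ × ℕ) :=
  Y.filter fun p => (p.1 = i ∧ j ≤ p.2) ∨ (p.2 = j ∧ i ≤ p.1)

/-- After removing the hook of `(i,j)`, boxes strictly south-east of `(i,j)` move
up-left by one step. -/
def shiftBox (i j : ℕ) (p : ℕ × ℕ) : ℕ × ℕ :=
  if i < p.1 ∧ j < p.2 then (p.1 - 1, p.2 - 1) else p

/-- The Young diagram `Y ∖ h_Y(i,j)` obtained by removing the hook of `(i,j)`. -/
def removeHook (Y : Finset (ℕ × ℕ)) (i j : ℕ) : Finset (ℕ × ℕ) :=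
  (Y \ hook Y i j).image (shiftBox i j)

/-- One move of MHRG(m,n): remove a hook; if the resulting diagram has a hook with
the same multiset of unimodal numbers, one such hook must also be removed
(this second removal happens at most once). -/
def Move (m n : ℕ) (Y Y' : Finset (ℕ × ℕ)) : Prop :=
  ∃ i j : ℕ, (i, j) ∈ Y ∧
    ((Y' = removeHook Y i j ∧
        ¬∃ i' j' : ℕ, (i', j') ∈ removeHook Y i j ∧
          Amul m n (hook (removeHook Y i j) i' j') = Amul m n (hook Y i j)) ∨
      (∃ i' j' : ℕ, (i', j') ∈ removeHook Y i j ∧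
        Amul m n (hook (removeHook Y i j) i' j') = Amul m n (hook Y i j) ∧
        Y' = removeHook (removeHook Y i j) i' j'))

/-- `T(Y_{m,n})`: the positions of MHRG(m,n) reachable from the starting position. -/
def Reach (m n : ℕ) (Y : Finset (ℕ × ℕ)) : Prop :=
  Relation.ReflTransGen (Move m n) (rect m n) Y

/-- `O(Y)`: the set of options of a position `Y` in MHRG(m,n). -/
def Opt (m n : ℕ) (Y : Finset (ℕ × ℕ)) : Set (Finset (ℕ × ℕ)) := {Y' | Move m n Y Y'}

lemma card_removeHook_lt (Y : Finset (ℕ × ℕ)) (i j : ℕ) (h : (i, j) ∈ Y) :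
    (removeHook Y i j).card < Y.card := by
  have hsub : hook Y i j ⊆ Y := Finset.filter_subset _ _
  have hmem : (i, j) ∈ hook Y i j :=
    Finset.mem_filter.mpr ⟨h, Or.inl ⟨rfl, le_rfl⟩⟩
  have h1 : (removeHook Y i j).card ≤ (Y \ hook Y i j).card := Finset.card_image_le
  have h2 : (Y \ hook Y i j).card = Y.card - (hook Y i j).card := by
    rw [Finset.card_sdiff, Finset.inter_eq_left.mpr hsub]
  have h3 : 0 < (hook Y i j).card := Finset.card_pos.mpr ⟨_, hmem⟩
  have h4 : (hook Y i j).card ≤ Y.card := Finset.card_le_card hsub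
  omega

lemma move_card_lt {m n : ℕ} {Y Y' : Finset (ℕ × ℕ)} (h : Move m n Y Y') :
    Y'.card < Y.card := by
  obtain ⟨i, j, hij, hc⟩ := h
  rcases hc with ⟨rfl, -⟩ | ⟨i', j', hij', -, rfl⟩
  · exact card_removeHook_lt Y i j hij
  · exact (card_removeHook_lt _ i' j' hij').trans (card_removeHook_lt Y i j hij)

/-- The minimal excludant. -/
noncomputable def mex (s : Set ℕ) : ℕ := sInf {k | k ∉ s}

/-- The Grundy value of a position of MHRG(m,n). -/
noncomputable def grundy (m n : ℕ) (Y : Finset (ℕ × ℕ)) : ℕ :=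
  mex {g : ℕ | ∃ Y', ∃ _ : Move m n Y Y', grundy m n Y' = g}
termination_by Y.card
decreasing_by exact move_card_lt (by assumption)

/-- The two-row Young diagram `(λ₁, λ₂)`. -/
def tworow (a b : ℕ) : Finset (ℕ × ℕ) :=
  ({1} : Finset ℕ) ×ˢ Finset.Icc 1 a ∪ ({2} : Finset ℕ) ×ˢ Finset.Icc 1 b

/-- `S` is a shifted Young diagram: rows are intervals `[i, λ_i]` with `λ` strictly
decreasing. -/
def IsShifted (S : Finset (ℕ × ℕ)) : Prop :=
  (∀ p ∈ S, 1 ≤ p.1 ∧ p.1 ≤ p.2) ∧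
  (∀ p ∈ S, ∀ j' : ℕ, p.1 ≤ j' → j' ≤ p.2 → (p.1, j') ∈ S) ∧
  (∀ p ∈ S, 2 ≤ p.1 → (p.1 - 1, p.2 + 1) ∈ S)

/-- The shifted Young diagram of a (strictly decreasing, positive) list of row lengths. -/
def shiftedOf (l : List ℕ) : Finset (ℕ × ℕ) :=
  (Finset.range l.length).biUnion fun i =>
    ({i + 1} : Finset ℕ) ×ˢ Finset.Icc (i + 1) (l.getD i 0)

/-- The staircase `S_n = (n, n-1, …, 1)`. -/
def staircase (n : ℕ) : List ℕ := (List.range n).map fun i => n - i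

/-- The shifted hook of the box `(i,j)` in `S` (box, arm, leg and tail). -/
def shook (S : Finset (ℕ × ℕ)) (i j : ℕ) : Finset (ℕ × ℕ) :=
  S.filter fun p => (p.1 = i ∧ j ≤ p.2) ∨ (p.2 = j ∧ i ≤ p.1) ∨ (p.1 = j + 1 ∧ j < p.2)

/-- The shifting of boxes performed after removing the shifted hook of `(i,j)`. -/
def sShiftBox (i j : ℕ) (p : ℕ × ℕ) : ℕ × ℕ :=
  if i < p.1 ∧ p.1 < j + 1 ∧ j < p.2 then (p.1 - 1, p.2 - 1)
  else if j + 1 < p.1 then (p.1 - 2, p.2 - 2)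
  else p

/-- The shifted Young diagram obtained by removing the shifted hook of `(i,j)`. -/
def sRemoveHook (S : Finset (ℕ × ℕ)) (i j : ℕ) : Finset (ℕ × ℕ) :=
  (S \ shook S i j).image (sShiftBox i j)

/-- One move of HRG on shifted Young diagrams: remove one hook. -/
def SMove (S S' : Finset (ℕ × ℕ)) : Prop :=
  ∃ i j : ℕ, (i, j) ∈ S ∧ S' = sRemoveHook S i j

lemma card_sRemoveHook_lt (S : Finset (ℕ × ℕ)) (i j : ℕ) (h : (i, j) ∈ S) :
    (sRemoveHook S i j).card < S.card := by
  have hsub : shook S i j ⊆ S := Finset.filter_subset _ _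
  have hmem : (i, j) ∈ shook S i j :=
    Finset.mem_filter.mpr ⟨h, Or.inl ⟨rfl, le_rfl⟩⟩
  have h1 : (sRemoveHook S i j).card ≤ (S \ shook S i j).card := Finset.card_image_le
  have h2 : (S \ shook S i j).card = S.card - (shook S i j).card := by
    rw [Finset.card_sdiff, Finset.inter_eq_left.mpr hsub]
  have h3 : 0 < (shook S i j).card := Finset.card_pos.mpr ⟨_, hmem⟩
  have h4 : (shook S i j).card ≤ S.card := Finset.card_le_card hsub
  omega

lemma smove_card_lt {S S' : Finset (ℕ × ℕ)} (h : SMove S S') : S'.card < S.card := by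
  obtain ⟨i, j, hij, rfl⟩ := h
  exact card_sRemoveHook_lt S i j hij

/-- The Grundy value of a position of HRG on shifted Young diagrams. -/
noncomputable def sgrundy (S : Finset (ℕ × ℕ)) : ℕ :=
  mex {g : ℕ | ∃ S', ∃ _ : SMove S S', sgrundy S' = g}
termination_by S.card
decreasing_by exact smove_card_lt (by assumption)

/-- `OH(Y)` for a two-row diagram `Y = (λ₁,λ₂)`: the results of single hook removals. -/
def OH (l1 l2 : ℕ) : Set (Finset (ℕ × ℕ)) :=
  {Y | ∃ a : ℕ, l2 ≤ a ∧ a < l1 ∧ Y = tworow a l2} ∪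
  {Y | ∃ b : ℕ, b < l2 ∧ Y = tworow l1 b} ∪
  {Y | ∃ a : ℕ, a < l2 ∧ Y = tworow (l2 - 1) a}


section AuxMHRG
variable {l1 l2 j : ℕ}

def vv (c k : ℕ) : ℤ := min (k : ℤ) (2 * c - k)

def seg (c p q : ℕ) : Multiset ℤ := (Finset.Icc p q).val.map (vv c)

lemma vv_refl {c k : ℕ} (h1 : 1 ≤ k) (h2 : k ≤ 2 * c - 1) : vv c (2 * c - k) = vv c k := by
  unfold vv
  have hc : 1 ≤ c := by omega
  have : ((2 * c - k : ℕ) : ℤ) = 2 * c - k := by omega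
  rw [this]
  omega

lemma seg_card (c p q : ℕ) : Multiset.card (seg c p q) = q + 1 - p := by
  simp [seg, Nat.card_Icc]

lemma seg_cons_left {c p q : ℕ} (h : p ≤ q) : seg c p q = vv c p ::ₘ seg c (p + 1) q := by
  unfold seg
  rw [show Finset.Icc (p + 1) q = Finset.Ioc p q from Finset.Icc_add_one_left_eq_Ioc p q,
    Finset.Icc_eq_cons_Ioc h]
  simp

lemma seg_cons_right {c p q : ℕ} (h : p ≤ q) (h1 : 1 ≤ q) :
    seg c p q = vv c q ::ₘ seg c p (q - 1) := by
  unfold seg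
  rw [show Finset.Icc p (q - 1) = Finset.Ico p q from Finset.Icc_sub_one_right_eq_Ico_of_not_isMin (fun hm => by have := hm (Nat.zero_le q); omega) p,
    Finset.Icc_eq_cons_Ico h]
  simp

lemma seg_refl {c p q : ℕ} (hp : 1 ≤ p) (hpq : p ≤ q) (hq : q ≤ 2 * c - 1) :
    seg c (2 * c - q) (2 * c - p) = seg c p q := by
  have key : ∀ d p q : ℕ, q - p = d → 1 ≤ p → p ≤ q → q ≤ 2 * c - 1 →
      seg c (2 * c - q) (2 * c - p) = seg c p q := by
    intro d
    induction d with
    | zero =>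
      intro p q hd hp hpq hq
      have : p = q := by omega
      subst this
      unfold seg
      simp [Finset.Icc_self, vv_refl hp hq]
    | succ d ih =>
      intro p q hd hp hpq hq
      have h1 : p < q := by omega
      rw [seg_cons_left (le_of_lt h1)]
      rw [seg_cons_right (by omega : 2 * c - q ≤ 2 * c - p) (by omega : 1 ≤ 2 * c - p)]
      rw [vv_refl hp (by omega)]
      have : 2 * c - p - 1 = 2 * c - (p + 1) := by omega
      rw [this]
      rw [ih (p + 1) q (by omega) (by omega) h1 hq]
  exact key (q - p) p q rfl hp hpq hq

lemma count_seg {c p q k : ℕ} (hp : 1 ≤ p) (hq : q ≤ 2 * c - 1) (hk1 : 1 ≤ k)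
    (hk2 : k ≤ 2 * c - 1) :
    Multiset.count (vv c k) (seg c p q) =
      (if p ≤ k ∧ k ≤ q then 1 else 0) +
        (if p ≤ 2 * c - k ∧ 2 * c - k ≤ q ∧ k ≠ c then 1 else 0) := by
  have hc : 1 ≤ c := by omega
  unfold seg
  rw [Multiset.count_map]
  have hval : ∀ j, j ∈ Finset.Icc p q → (vv c k = vv c j ↔ (j = k ∨ j = 2 * c - k)) := by
    intro j hj
    rw [Finset.mem_Icc] at hj
    unfold vv
    constructor
    · intro h; omega
    · intro h; omega
  have : Multiset.filter (fun a => vv c k = vv c a) (Finset.Icc p q).val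
      = Multiset.filter (fun a => a = k ∨ a = 2 * c - k) (Finset.Icc p q).val := by
    apply Multiset.filter_congr
    intro j hj
    exact hval j hj
  rw [this]
  have hfe : Multiset.filter (fun a => a = k ∨ a = 2 * c - k) (Finset.Icc p q).val
      = ((Finset.Icc p q).filter (fun a => a = k ∨ a = 2 * c - k)).val := rfl
  rw [hfe]
  show ((Finset.Icc p q).filter (fun a => a = k ∨ a = 2 * c - k)).card = _
  rw [Finset.filter_or, Finset.filter_eq', Finset.filter_eq']
  by_cases hkc : k = c
  · have h2c : 2 * c - k = k := by omega
    rw [h2c]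
    rw [Finset.union_self]
    clear this hfe hval
    simp only [apply_ite Finset.card, Finset.card_singleton, Finset.card_empty, Finset.mem_Icc]
    split_ifs <;> omega
  · have hne : k ≠ 2 * c - k := by omega
    rw [Finset.card_union_of_disjoint]
    · clear this hfe hval
      simp only [apply_ite Finset.card, Finset.card_singleton, Finset.card_empty, Finset.mem_Icc]
      split_ifs <;> omega
    · split_ifs <;> simp [Finset.disjoint_singleton_left, hne] <;> omega

lemma chi_extract {A B A' B' : Prop} [Decidable A] [Decidable B] [Decidable A'] [Decidable B']
    (h : (if A then (1 : ℕ) else 0) + (if B then 1 else 0) =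
      (if A' then 1 else 0) + (if B' then 1 else 0)) :
    (A ∧ B ↔ A' ∧ B') ∧ (A ∨ B ↔ A' ∨ B') := by
  split_ifs at h <;> simp_all <;> tauto

set_option maxHeartbeats 1000000 in

lemma seg_eq_iff {c p q p' q' : ℕ} (hp : 1 ≤ p) (hpq : p ≤ q) (hq : q ≤ 2 * c - 1)
    (hp' : 1 ≤ p') (hpq' : p' ≤ q') (hq' : q' ≤ 2 * c - 1) :
    seg c p q = seg c p' q' ↔ (p = p' ∧ q = q') ∨ (p' = 2 * c - q ∧ q' = 2 * c - p) := by
  constructor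
  · intro h
    have hcard : q + 1 - p = q' + 1 - p' := by
      have := congrArg Multiset.card h
      rwa [seg_card, seg_card] at this
    have E : ∀ k, 1 ≤ k → k ≤ 2 * c - 1 →
        ((p ≤ k ∧ k ≤ q) ∧ (p ≤ 2 * c - k ∧ 2 * c - k ≤ q ∧ k ≠ c) ↔
          (p' ≤ k ∧ k ≤ q') ∧ (p' ≤ 2 * c - k ∧ 2 * c - k ≤ q' ∧ k ≠ c)) ∧
        ((p ≤ k ∧ k ≤ q) ∨ (p ≤ 2 * c - k ∧ 2 * c - k ≤ q ∧ k ≠ c) ↔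
          (p' ≤ k ∧ k ≤ q') ∨ (p' ≤ 2 * c - k ∧ 2 * c - k ≤ q' ∧ k ≠ c)) := by
      intro k hk1 hk2
      have hcnt := congrArg (Multiset.count (vv c k)) h
      rw [count_seg hp hq hk1 hk2, count_seg hp' hq' hk1 hk2] at hcnt
      exact chi_extract hcnt
    have F1 := (E p hp (by omega)).2.mp (Or.inl ⟨le_rfl, hpq⟩)
    have F2 := (E q (by omega) hq).2.mp (Or.inl ⟨hpq, le_rfl⟩)
    have F3 := (E p' hp' (by omega)).2.mpr (Or.inl ⟨le_rfl, hpq'⟩)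
    have F4 := (E q' (by omega) hq').2.mpr (Or.inl ⟨hpq', le_rfl⟩)
    omega
  · rintro (⟨rfl, rfl⟩ | ⟨rfl, rfl⟩)
    · rfl
    · exact (seg_refl hp hpq hq).symm

lemma AmulA (n' j l : ℕ) :
    Amul 2 (2 * n') (({1} : Finset ℕ) ×ˢ Finset.Icc j l) = seg (n' + 1) (j + 1) (l + 1) := by
  unfold Amul seg
  rw [Finset.singleton_product]
  rw [show Finset.Icc (j + 1) (l + 1) = (Finset.Icc j l).map (addRightEmbedding 1) by
    rw [Finset.map_add_right_Icc]]
  simp only [Finset.map_val, Multiset.map_map]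
  apply Multiset.map_congr rfl
  intro k _
  simp only [Function.comp_apply, unimodal, vv, addRightEmbedding_apply,
    Function.Embedding.coeFn_mk]
  push_cast
  omega

lemma AmulC (n' j l : ℕ) :
    Amul 2 (2 * n') (({2} : Finset ℕ) ×ˢ Finset.Icc j l) = seg (n' + 1) j l := by
  unfold Amul seg
  rw [Finset.singleton_product]
  simp only [Finset.map_val, Multiset.map_map]
  apply Multiset.map_congr rfl
  intro k _
  simp only [Function.comp_apply, unimodal, vv, Function.Embedding.coeFn_mk]
  push_cast
  omega

lemma AmulB (n' j l : ℕ) (hjl : j ≤ l) :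
    Amul 2 (2 * n') ((({1} : Finset ℕ) ×ˢ Finset.Icc j l) ∪ {(2, j)}) =
      seg (n' + 1) j (l + 1) := by
  have hnm : ((2, j) : ℕ × ℕ) ∉ ({1} : Finset ℕ) ×ˢ Finset.Icc j l := by simp
  rw [show (({1} : Finset ℕ) ×ˢ Finset.Icc j l) ∪ {(2, j)}
      = insert (2, j) (({1} : Finset ℕ) ×ˢ Finset.Icc j l) by
    rw [Finset.union_comm, ← Finset.insert_eq]]
  unfold Amul
  rw [Finset.insert_val_of_notMem hnm]
  rw [Multiset.map_cons]
  have h2 : unimodal 2 (2 * n') (2, j) = vv (n' + 1) j := by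
    simp only [unimodal, vv]; push_cast; omega
  rw [h2, show (({1} : Finset ℕ) ×ˢ Finset.Icc j l).val.map (unimodal 2 (2 * n'))
      = Amul 2 (2 * n') (({1} : Finset ℕ) ×ˢ Finset.Icc j l) from rfl, AmulA]
  exact (seg_cons_left (by omega)).symm

lemma mem_tworow {a b : ℕ} {p : ℕ × ℕ} :
    p ∈ tworow a b ↔ (p.1 = 1 ∧ 1 ≤ p.2 ∧ p.2 ≤ a) ∨ (p.1 = 2 ∧ 1 ≤ p.2 ∧ p.2 ≤ b) := by
  cases p with
  | mk x y =>
    simp [tworow, Finset.mem_Icc]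
    omega

lemma hookA (h0 : l2 < j) (h2 : j ≤ l1) :
    hook (tworow l1 l2) 1 j = ({1} : Finset ℕ) ×ˢ Finset.Icc j l1 := by
  ext ⟨x, y⟩
  simp [hook, mem_tworow, Finset.mem_Icc]
  omega

lemma hookB (hj : 1 ≤ j) (h2 : j ≤ l2) (h3 : l2 ≤ l1) :
    hook (tworow l1 l2) 1 j = (({1} : Finset ℕ) ×ˢ Finset.Icc j l1) ∪ {(2, j)} := by
  ext ⟨x, y⟩
  simp [hook, mem_tworow, Finset.mem_Icc, Prod.ext_iff]
  omega

lemma hookC (hj : 1 ≤ j) (h2 : j ≤ l2) :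
    hook (tworow l1 l2) 2 j = ({2} : Finset ℕ) ×ˢ Finset.Icc j l2 := by
  ext ⟨x, y⟩
  simp [hook, mem_tworow, Finset.mem_Icc]
  omega

lemma removeA (h0 : l2 < j) (h2 : j ≤ l1) :
    removeHook (tworow l1 l2) 1 j = tworow (j - 1) l2 := by
  ext ⟨x, y⟩
  simp only [removeHook, Finset.mem_image, Finset.mem_sdiff, hookA h0 h2, mem_tworow,
    Finset.mem_product, Finset.mem_Icc, Finset.mem_singleton]
  constructor
  · rintro ⟨⟨px, py⟩, ⟨hp, hn⟩, hs⟩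
    simp only [shiftBox] at hs
    split_ifs at hs with hc
    · simp at hc hp hn ⊢
      omega
    · simp at hp hn hs ⊢
      omega
  · intro hxy
    refine ⟨(x, y), ?_, ?_⟩
    · simp at hxy ⊢; omega
    · simp only [shiftBox]
      rw [if_neg]
      simp at hxy ⊢
      omega

lemma removeB (hj : 1 ≤ j) (h2 : j ≤ l2) (h3 : l2 ≤ l1) :
    removeHook (tworow l1 l2) 1 j = tworow (l2 - 1) (j - 1) := by
  ext ⟨x, y⟩
  simp only [removeHook, Finset.mem_image, Finset.mem_sdiff, hookB hj h2 h3, mem_tworow,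
    Finset.mem_product, Finset.mem_Icc, Finset.mem_singleton, Finset.mem_union, Prod.ext_iff]
  constructor
  · rintro ⟨⟨px, py⟩, ⟨hp, hn⟩, hs⟩
    simp only [shiftBox] at hs
    split_ifs at hs with hc
    · simp at hc hp hn hs ⊢
      omega
    · simp at hc hp hn hs ⊢
      omega
  · intro hxy
    by_cases hy : x = 1 ∧ j ≤ y
    · refine ⟨(2, y + 1), ?_, ?_⟩
      · simp; omega
      · simp only [shiftBox]
        rw [if_pos (by simp; omega)]
        simp; omega
    · refine ⟨(x, y), ?_, ?_⟩
      · simp; omega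
      · simp only [shiftBox]
        rw [if_neg (by simp; omega)]
        simp

lemma removeC (hj : 1 ≤ j) (h2 : j ≤ l2) (h3 : l2 ≤ l1) :
    removeHook (tworow l1 l2) 2 j = tworow l1 (j - 1) := by
  ext ⟨x, y⟩
  simp only [removeHook, Finset.mem_image, Finset.mem_sdiff, hookC hj h2, mem_tworow,
    Finset.mem_product, Finset.mem_Icc, Finset.mem_singleton]
  constructor
  · rintro ⟨⟨px, py⟩, ⟨hp, hn⟩, hs⟩
    simp only [shiftBox] at hs
    split_ifs at hs with hc
    · simp at hc hp hn hs ⊢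
      omega
    · simp at hc hp hn hs ⊢
      omega
  · intro hxy
    refine ⟨(x, y), ?_, ?_⟩
    · simp at hxy ⊢; omega
    · simp only [shiftBox]
      rw [if_neg]
      simp at hxy ⊢
      omega

lemma match_classify {n' a b i' j' ph qh : ℕ} (hba : b ≤ a) (han : a ≤ 2 * n')
    (hph : 1 ≤ ph) (hpq : ph ≤ qh) (hqh : qh ≤ 2 * n' + 1)
    (hm : (i', j') ∈ tworow a b)
    (heq : Amul 2 (2 * n') (hook (tworow a b) i' j') = seg (n' + 1) ph qh) :
    (i' = 1 ∧ b < j' ∧ j' ≤ a ∧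
      ((j' + 1 = ph ∧ a + 1 = qh) ∨ (ph = 2 * n' + 1 - a ∧ qh = 2 * n' + 1 - j'))) ∨
    (i' = 1 ∧ 1 ≤ j' ∧ j' ≤ b ∧
      ((j' = ph ∧ a + 1 = qh) ∨ (ph = 2 * n' + 1 - a ∧ qh = 2 * n' + 2 - j'))) ∨
    (i' = 2 ∧ 1 ≤ j' ∧ j' ≤ b ∧
      ((j' = ph ∧ b = qh) ∨ (ph = 2 * n' + 2 - b ∧ qh = 2 * n' + 2 - j'))) := by
  have hm' := mem_tworow.mp hm
  simp only at hm'
  rcases hm' with ⟨h1, hj1, hja⟩ | ⟨h2, hj1, hjb⟩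
  · subst h1
    by_cases hbj : b < j'
    · rw [hookA hbj hja, AmulA] at heq
      have hd := (seg_eq_iff (by omega) (by omega) (by omega) hph hpq (by omega)).mp heq
      left
      exact ⟨rfl, hbj, hja, by omega⟩
    · have hjb : j' ≤ b := by omega
      rw [hookB hj1 hjb hba, AmulB n' j' a (le_trans hjb hba)] at heq
      have hd := (seg_eq_iff (by omega) (by omega) (by omega) hph hpq (by omega)).mp heq
      right; left
      exact ⟨rfl, hj1, hjb, by omega⟩
  · subst h2
    rw [hookC hj1 hjb, AmulC] at heq
    have hd := (seg_eq_iff (by omega) (by omega) (by omega) hph hpq (by omega)).mp heq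
    right; right
    exact ⟨rfl, hj1, hjb, by omega⟩

lemma noMatchA {n' l1 l2 j : ℕ} (h21 : l2 ≤ l1) (h1n : l1 ≤ 2 * n') (h0 : l2 < j)
    (h2 : j ≤ l1) (hsum : j - 1 + l2 ≠ 2 * n') :
    ¬ ∃ i' j' : ℕ, (i', j') ∈ removeHook (tworow l1 l2) 1 j ∧
      Amul 2 (2 * n') (hook (removeHook (tworow l1 l2) 1 j) i' j') =
        Amul 2 (2 * n') (hook (tworow l1 l2) 1 j) := by
  rw [removeA h0 h2, hookA h0 h2, AmulA]
  rintro ⟨i', j', hm, heq⟩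
  have hc := match_classify (n' := n') (a := j - 1) (b := l2) (by omega) (by omega) (by omega)
    (by omega) (by omega) hm heq
  omega

lemma noMatchB {n' l1 l2 j : ℕ} (h21 : l2 ≤ l1) (h1n : l1 ≤ 2 * n') (hj : 1 ≤ j)
    (h2 : j ≤ l2) (hsum : l2 - 1 + (j - 1) ≠ 2 * n') :
    ¬ ∃ i' j' : ℕ, (i', j') ∈ removeHook (tworow l1 l2) 1 j ∧
      Amul 2 (2 * n') (hook (removeHook (tworow l1 l2) 1 j) i' j') =
        Amul 2 (2 * n') (hook (tworow l1 l2) 1 j) := by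
  rw [removeB hj h2 h21, hookB hj h2 h21, AmulB n' j l1 (le_trans h2 h21)]
  rintro ⟨i', j', hm, heq⟩
  have hc := match_classify (n' := n') (a := l2 - 1) (b := j - 1) (by omega) (by omega) (by omega)
    (by omega) (by omega) hm heq
  omega

lemma noMatchC {n' l1 l2 j : ℕ} (h21 : l2 ≤ l1) (h1n : l1 ≤ 2 * n') (hj : 1 ≤ j)
    (h2 : j ≤ l2) (hsum : l1 + (j - 1) ≠ 2 * n') :
    ¬ ∃ i' j' : ℕ, (i', j') ∈ removeHook (tworow l1 l2) 2 j ∧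
      Amul 2 (2 * n') (hook (removeHook (tworow l1 l2) 2 j) i' j') =
        Amul 2 (2 * n') (hook (tworow l1 l2) 2 j) := by
  rw [removeC hj h2 h21, hookC hj h2, AmulC]
  rintro ⟨i', j', hm, heq⟩
  have hc := match_classify (n' := n') (a := l1) (b := j - 1) (by omega) (by omega) (by omega)
    (by omega) (by omega) hm heq
  omega

lemma matchExA {n' l1 l2 j : ℕ} (h21 : l2 ≤ l1) (h1n : l1 ≤ 2 * n') (h0 : l2 < j)
    (h2 : j ≤ l1) (hsum : j + l2 = 2 * n' + 1) :
    (2, 2 * n' + 1 - l1) ∈ removeHook (tworow l1 l2) 1 j ∧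
      Amul 2 (2 * n') (hook (removeHook (tworow l1 l2) 1 j) 2 (2 * n' + 1 - l1)) =
        Amul 2 (2 * n') (hook (tworow l1 l2) 1 j) := by
  rw [removeA h0 h2, hookA h0 h2, AmulA]
  constructor
  · rw [mem_tworow]; right; simp; omega
  · rw [hookC (by omega) (by omega : 2 * n' + 1 - l1 ≤ l2), AmulC]
    rw [seg_eq_iff (by omega) (by omega) (by omega) (by omega) (by omega) (by omega)]
    right; omega

lemma matchExB {n' l1 l2 j : ℕ} (h21 : l2 ≤ l1) (h1n : l1 ≤ 2 * n') (hj : 1 ≤ j)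
    (h2 : j ≤ l2) (hsum : l2 + j = 2 * n' + 2) :
    (1, 2 * n' + 1 - l1) ∈ removeHook (tworow l1 l2) 1 j ∧
      Amul 2 (2 * n') (hook (removeHook (tworow l1 l2) 1 j) 1 (2 * n' + 1 - l1)) =
        Amul 2 (2 * n') (hook (tworow l1 l2) 1 j) := by
  rw [removeB hj h2 h21, hookB hj h2 h21, AmulB n' j l1 (le_trans h2 h21)]
  constructor
  · rw [mem_tworow]; left; simp; omega
  · rw [hookB (by omega) (by omega : 2 * n' + 1 - l1 ≤ j - 1) (by omega : j - 1 ≤ l2 - 1),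
      AmulB n' _ _ (by omega : 2 * n' + 1 - l1 ≤ l2 - 1)]
    rw [show l2 - 1 + 1 = l2 by omega]
    rw [seg_eq_iff (by omega) (by omega) (by omega) (by omega) (by omega) (by omega)]
    right; omega

lemma matchExC {n' l1 l2 j : ℕ} (h21 : l2 ≤ l1) (h1n : l1 ≤ 2 * n') (hj : 1 ≤ j)
    (h2 : j ≤ l2) (hsum : l1 + j = 2 * n' + 1) :
    (1, 2 * n' + 1 - l2) ∈ removeHook (tworow l1 l2) 2 j ∧
      Amul 2 (2 * n') (hook (removeHook (tworow l1 l2) 2 j) 1 (2 * n' + 1 - l2)) =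
        Amul 2 (2 * n') (hook (tworow l1 l2) 2 j) := by
  rw [removeC hj h2 h21, hookC hj h2, AmulC]
  constructor
  · rw [mem_tworow]; left; simp; omega
  · rw [hookA (by omega : j - 1 < 2 * n' + 1 - l2) (by omega : 2 * n' + 1 - l2 ≤ l1), AmulA]
    rw [show 2 * n' + 1 - l2 + 1 = 2 * n' + 2 - l2 by omega]
    rw [seg_eq_iff (by omega) (by omega) (by omega) (by omega) (by omega) (by omega)]
    right; omega

lemma opt_lt {n' l1 l2 : ℕ} (h21 : l2 ≤ l1) (h1n : l1 ≤ 2 * n') (hlt : l1 + l2 < 2 * n') :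
    Opt 2 (2 * n') (tworow l1 l2) = OH l1 l2 := by
  ext Y'
  simp only [Opt, Set.mem_setOf_eq, OH, Set.mem_union]
  constructor
  · rintro ⟨i, j, hij, hcase⟩
    have hm := mem_tworow.mp hij
    simp only at hm
    rcases hm with ⟨hi, hj1, hjl⟩ | ⟨hi, hj1, hjl⟩
    · subst hi
      by_cases hbj : l2 < j
      · rcases hcase with ⟨hY', _⟩ | ⟨i', j', hm', heq', _⟩
        · left; left
          exact ⟨j - 1, by omega, by omega, by rw [hY', removeA hbj hjl]⟩
        · exact absurd ⟨i', j', hm', heq'⟩ (noMatchA h21 h1n hbj hjl (by omega))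
      · have hjb : j ≤ l2 := by omega
        rcases hcase with ⟨hY', _⟩ | ⟨i', j', hm', heq', _⟩
        · right
          exact ⟨j - 1, by omega, by rw [hY', removeB hj1 hjb h21]⟩
        · exact absurd ⟨i', j', hm', heq'⟩ (noMatchB h21 h1n hj1 hjb (by omega))
    · subst hi
      rcases hcase with ⟨hY', _⟩ | ⟨i', j', hm', heq', _⟩
      · left; right
        exact ⟨j - 1, by omega, by rw [hY', removeC hj1 hjl h21]⟩
      · exact absurd ⟨i', j', hm', heq'⟩ (noMatchC h21 h1n hj1 hjl (by omega))
  · rintro ((⟨a, ha1, ha2, rfl⟩ | ⟨b, hb, rfl⟩) | ⟨a, ha, rfl⟩)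
    · refine ⟨1, a + 1, mem_tworow.mpr (Or.inl ⟨rfl, by omega, by omega⟩),
        Or.inl ⟨?_, noMatchA h21 h1n (by omega) (by omega) (by omega)⟩⟩
      rw [removeA (by omega) (by omega), Nat.add_sub_cancel]
    · refine ⟨2, b + 1, mem_tworow.mpr (Or.inr ⟨rfl, by omega, by omega⟩),
        Or.inl ⟨?_, noMatchC h21 h1n (by omega) (by omega) (by omega)⟩⟩
      rw [removeC (by omega) (by omega) h21, Nat.add_sub_cancel]
    · refine ⟨1, a + 1, mem_tworow.mpr (Or.inl ⟨rfl, by omega, by omega⟩),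
        Or.inl ⟨?_, noMatchB h21 h1n (by omega) (by omega) (by omega)⟩⟩
      rw [removeB (by omega) (by omega) h21, Nat.add_sub_cancel]

lemma tworow_inj {a b a' b' : ℕ} (hab : b ≤ a) (hab' : b' ≤ a')
    (h : tworow a b = tworow a' b') : a = a' ∧ b = b' := by
  have h1 : ∀ y : ℕ, (1 ≤ y ∧ y ≤ a) ↔ (1 ≤ y ∧ y ≤ a') := by
    intro y
    have := Finset.ext_iff.mp h (1, y)
    simp [mem_tworow] at this
    omega
  have h2 : ∀ y : ℕ, (1 ≤ y ∧ y ≤ b) ↔ (1 ≤ y ∧ y ≤ b') := by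
    intro y
    have := Finset.ext_iff.mp h (2, y)
    simp [mem_tworow] at this
    omega
  constructor
  · by_contra hne
    rcases Nat.lt_or_ge a a' with hl | hl
    · have := (h1 a').mpr ⟨by omega, le_rfl⟩; omega
    · have : a' < a := by omega
      have := (h1 a).mp ⟨by omega, le_rfl⟩
      omega
  · by_contra hne
    rcases Nat.lt_or_ge b b' with hl | hl
    · have := (h2 b').mpr ⟨by omega, le_rfl⟩; omega
    · have : b' < b := by omega
      have := (h2 b).mp ⟨by omega, le_rfl⟩
      omega

lemma opt_gt {n' l1 l2 : ℕ} (h21 : l2 ≤ l1) (h1n : l1 ≤ 2 * n') (hgt : 2 * n' < l1 + l2) :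
    Opt 2 (2 * n') (tworow l1 l2) =
      (OH l1 l2 \ {Y | ∃ a b : ℕ, b ≤ a ∧ a + b = 2 * n' ∧ Y = tworow a b}) ∪
        {tworow (2 * n' - l2) (2 * n' - l1)} := by
  have hl2n : l2 ≤ 2 * n' := le_trans h21 h1n
  ext Y'
  simp only [Opt, Set.mem_setOf_eq, OH, Set.mem_union, Set.mem_diff, Set.mem_singleton_iff]
  constructor
  · rintro ⟨i, j, hij, hcase⟩
    have hm := mem_tworow.mp hij
    simp only at hm
    rcases hm with ⟨hi, hj1, hjl⟩ | ⟨hi, hj1, hjl⟩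
    · subst hi
      by_cases hbj : l2 < j
      · -- type A removal
        by_cases hsum : j - 1 + l2 = 2 * n'
        · -- triggered
          rcases hcase with ⟨_, hno⟩ | ⟨i', j', hm', heq', hY'⟩
          · exact absurd ⟨2, 2 * n' + 1 - l1,
              matchExA h21 h1n hbj hjl (by omega)⟩ hno
          · have hR := removeA hbj hjl
            rw [hR] at hm' heq' hY'
            rw [hookA hbj hjl, AmulA] at heq'
            have hc := match_classify (n' := n') (a := j - 1) (b := l2) (by omega) (by omega)
              (by omega) (by omega) (by omega) hm' heq'
            have hij' : i' = 2 ∧ j' = 2 * n' + 1 - l1 := by omega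
            obtain ⟨rfl, rfl⟩ := hij'
            rw [removeC (by omega) (by omega) (by omega)] at hY'
            right
            rw [hY']
            congr 1 <;> omega
        · -- not triggered
          rcases hcase with ⟨hY', _⟩ | ⟨i', j', hm', heq', _⟩
          · left
            constructor
            · left; left
              exact ⟨j - 1, by omega, by omega, by rw [hY', removeA hbj hjl]⟩
            · rintro ⟨a', b', hba', hs', hEq⟩
              rw [hY', removeA hbj hjl] at hEq
              obtain ⟨h1, h2⟩ := tworow_inj (by omega) hba' hEq
              omega
          · exact absurd ⟨i', j', hm', heq'⟩ (noMatchA h21 h1n hbj hjl hsum)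
      · -- type B removal
        have hjb : j ≤ l2 := by omega
        by_cases hsum : l2 - 1 + (j - 1) = 2 * n'
        · rcases hcase with ⟨_, hno⟩ | ⟨i', j', hm', heq', hY'⟩
          · exact absurd ⟨1, 2 * n' + 1 - l1,
              matchExB h21 h1n hj1 hjb (by omega)⟩ hno
          · have hR := removeB hj1 hjb h21
            rw [hR] at hm' heq' hY'
            rw [hookB hj1 hjb h21, AmulB n' j l1 (le_trans hjb h21)] at heq'
            have hc := match_classify (n' := n') (a := l2 - 1) (b := j - 1) (by omega) (by omega)
              (by omega) (by omega) (by omega) hm' heq'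
            have hij' : i' = 1 ∧ j' = 2 * n' + 1 - l1 := by omega
            obtain ⟨rfl, rfl⟩ := hij'
            rw [removeB (by omega) (by omega) (by omega)] at hY'
            right
            rw [hY']
            congr 1 <;> omega
        · rcases hcase with ⟨hY', _⟩ | ⟨i', j', hm', heq', _⟩
          · left
            constructor
            · right
              exact ⟨j - 1, by omega, by rw [hY', removeB hj1 hjb h21]⟩
            · rintro ⟨a', b', hba', hs', hEq⟩
              rw [hY', removeB hj1 hjb h21] at hEq
              obtain ⟨h1, h2⟩ := tworow_inj (by omega) hba' hEq
              omega
          · exact absurd ⟨i', j', hm', heq'⟩ (noMatchB h21 h1n hj1 hjb hsum)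
    · subst hi
      -- type C removal
      by_cases hsum : l1 + (j - 1) = 2 * n'
      · rcases hcase with ⟨_, hno⟩ | ⟨i', j', hm', heq', hY'⟩
        · exact absurd ⟨1, 2 * n' + 1 - l2,
            matchExC h21 h1n hj1 hjl (by omega)⟩ hno
        · have hR := removeC hj1 hjl h21
          rw [hR] at hm' heq' hY'
          rw [hookC hj1 hjl, AmulC] at heq'
          have hc := match_classify (n' := n') (a := l1) (b := j - 1) (by omega) (by omega)
            (by omega) (by omega) (by omega) hm' heq'
          have hij' : i' = 1 ∧ j' = 2 * n' + 1 - l2 := by omega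
          obtain ⟨rfl, rfl⟩ := hij'
          rw [removeA (by omega) (by omega)] at hY'
          right
          rw [hY']
          congr 1 <;> omega
      · rcases hcase with ⟨hY', _⟩ | ⟨i', j', hm', heq', _⟩
        · left
          constructor
          · left; right
            exact ⟨j - 1, by omega, by rw [hY', removeC hj1 hjl h21]⟩
          · rintro ⟨a', b', hba', hs', hEq⟩
            rw [hY', removeC hj1 hjl h21] at hEq
            obtain ⟨h1, h2⟩ := tworow_inj (by omega) hba' hEq
            omega
        · exact absurd ⟨i', j', hm', heq'⟩ (noMatchC h21 h1n hj1 hjl hsum)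
  · rintro (⟨hOH, hnS⟩ | hpt)
    · rcases hOH with (⟨a, ha1, ha2, rfl⟩ | ⟨b, hb, rfl⟩) | ⟨a, ha, rfl⟩
      · have hs : a + l2 ≠ 2 * n' := fun h => hnS ⟨a, l2, ha1, h, rfl⟩
        refine ⟨1, a + 1, mem_tworow.mpr (Or.inl ⟨rfl, by omega, by omega⟩),
          Or.inl ⟨?_, noMatchA h21 h1n (by omega) (by omega) (by omega)⟩⟩
        rw [removeA (by omega) (by omega), Nat.add_sub_cancel]
      · have hs : l1 + b ≠ 2 * n' := fun h => hnS ⟨l1, b, by omega, h, rfl⟩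
        refine ⟨2, b + 1, mem_tworow.mpr (Or.inr ⟨rfl, by omega, by omega⟩),
          Or.inl ⟨?_, noMatchC h21 h1n (by omega) (by omega) (by omega)⟩⟩
        rw [removeC (by omega) (by omega) h21, Nat.add_sub_cancel]
      · have hs : l2 - 1 + a ≠ 2 * n' := fun h => hnS ⟨l2 - 1, a, by omega, h, rfl⟩
        refine ⟨1, a + 1, mem_tworow.mpr (Or.inl ⟨rfl, by omega, by omega⟩),
          Or.inl ⟨?_, noMatchB h21 h1n (by omega) (by omega) (by omega)⟩⟩
        rw [removeB (by omega) (by omega) h21, Nat.add_sub_cancel]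
    · refine ⟨2, 2 * n' + 1 - l1, mem_tworow.mpr (Or.inr ⟨rfl, by omega, by omega⟩),
        Or.inr ⟨1, 2 * n' + 1 - l2, (matchExC h21 h1n (by omega) (by omega) (by omega)).1,
          (matchExC h21 h1n (by omega) (by omega) (by omega)).2, ?_⟩⟩
      rw [removeC (by omega) (by omega) h21]
      rw [removeA (by omega : 2 * n' + 1 - l1 - 1 < 2 * n' + 1 - l2) (by omega)]
      rw [hpt]
      congr 1 <;> omega

lemma rect_eq_tworow (n : ℕ) : rect 2 n = tworow n n := by
  ext ⟨x, y⟩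
  simp [rect, mem_tworow, Finset.mem_Icc]
  omega

lemma isYD_tworow {a b : ℕ} (h : b ≤ a) : IsYD (tworow a b) := by
  constructor
  · intro p hp; rw [mem_tworow] at hp; omega
  · intro p hp q h1 h2 h3 h4
    rw [mem_tworow] at hp ⊢
    omega

lemma tworow_subset_rect {a b n : ℕ} (ha : a ≤ n) (hb : b ≤ n) :
    tworow a b ⊆ rect 2 n := by
  intro p hp
  rw [mem_tworow] at hp
  simp [rect, Finset.mem_Icc]
  omega

lemma yd_eq_tworow {n : ℕ} {Y : Finset (ℕ × ℕ)} (hY : IsYD Y) (hsub : Y ⊆ rect 2 n) :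
    ∃ a b : ℕ, b ≤ a ∧ a ≤ n ∧ Y = tworow a b := by
  set a := Y.sup (fun p => if p.1 = 1 then p.2 else 0) with ha
  set b := Y.sup (fun p => if p.1 = 2 then p.2 else 0) with hb
  have hrange : ∀ p ∈ Y, (p.1 = 1 ∨ p.1 = 2) ∧ 1 ≤ p.2 := by
    intro p hp
    have h2 := hY.1 p hp
    have h3 := hsub hp
    simp [rect, Finset.mem_Icc] at h3
    omega
  have haY : ∀ p ∈ Y, p.1 = 1 → p.2 ≤ a := by
    intro p hp h1
    have := Finset.le_sup (f := fun p : ℕ × ℕ => if p.1 = 1 then p.2 else 0) hp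
    simp only [h1, if_pos] at this
    exact this
  have hbY : ∀ p ∈ Y, p.1 = 2 → p.2 ≤ b := by
    intro p hp h1
    have := Finset.le_sup (f := fun p : ℕ × ℕ => if p.1 = 2 then p.2 else 0) hp
    simp only [h1, if_pos] at this
    exact this
  have hmem1 : ∀ y : ℕ, 1 ≤ y → y ≤ a → (1, y) ∈ Y := by
    intro y hy1 hya
    have hne : Y.Nonempty := by
      by_contra hc
      rw [Finset.not_nonempty_iff_eq_empty] at hc
      rw [ha, hc] at hya
      simp at hya
      omega
    obtain ⟨p, hp, hpa⟩ := Finset.exists_mem_eq_sup Y hne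
      (fun p : ℕ × ℕ => if p.1 = 1 then p.2 else 0)
    rw [← ha] at hpa
    by_cases h1 : p.1 = 1
    · rw [if_pos h1] at hpa
      exact hY.2 p hp (1, y) (by omega) hy1 (by omega) (by omega)
    · rw [if_neg h1] at hpa
      omega
  have hmem2 : ∀ y : ℕ, 1 ≤ y → y ≤ b → (2, y) ∈ Y := by
    intro y hy1 hya
    have hne : Y.Nonempty := by
      by_contra hc
      rw [Finset.not_nonempty_iff_eq_empty] at hc
      rw [hb, hc] at hya
      simp at hya
      omega
    obtain ⟨p, hp, hpa⟩ := Finset.exists_mem_eq_sup Y hne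
      (fun p : ℕ × ℕ => if p.1 = 2 then p.2 else 0)
    rw [← hb] at hpa
    by_cases h1 : p.1 = 2
    · rw [if_pos h1] at hpa
      exact hY.2 p hp (2, y) (by omega) hy1 (by omega) (by omega)
    · rw [if_neg h1] at hpa
      omega
  have hba : b ≤ a := by
    rcases Nat.eq_zero_or_pos b with h | h
    · omega
    · have h2 := hmem2 b h le_rfl
      have h3 := hY.2 _ h2 (1, b) (by omega) h (by omega) le_rfl
      exact haY _ h3 rfl
  have han : a ≤ n := by
    rcases Nat.eq_zero_or_pos a with h | h
    · omega
    · have h2 := hmem1 a h le_rfl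
      have h3 := hsub h2
      simp [rect, Finset.mem_Icc] at h3
      omega
  refine ⟨a, b, hba, han, ?_⟩
  ext ⟨x, y⟩
  rw [mem_tworow]
  constructor
  · intro hp
    have h1 := hrange _ hp
    simp only at h1 ⊢
    rcases h1.1 with h | h
    · exact Or.inl ⟨h, h1.2, haY _ hp h⟩
    · exact Or.inr ⟨h, h1.2, hbY _ hp h⟩
  · rintro (⟨hx, hy1, hy2⟩ | ⟨hx, hy1, hy2⟩)
    · simp only at hx; subst hx; exact hmem1 y hy1 hy2
    · simp only at hx; subst hx; exact hmem2 y hy1 hy2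

lemma reach_invariant {n' : ℕ} (hn' : 1 ≤ n') {Y : Finset (ℕ × ℕ)}
    (h : Reach 2 (2 * n') Y) :
    ∃ a b : ℕ, b ≤ a ∧ a ≤ 2 * n' ∧ a + b ≠ 2 * n' ∧ Y = tworow a b := by
  unfold Reach at h
  induction h with
  | refl => exact ⟨2 * n', 2 * n', le_rfl, le_rfl, by omega, rect_eq_tworow _⟩
  | tail hr hmove ih =>
    obtain ⟨a, b, hba, han, hs, rfl⟩ := ih
    rcases Nat.lt_or_ge (a + b) (2 * n') with hlt | hge
    · have hopt : _ ∈ Opt 2 (2 * n') (tworow a b) := hmove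
      rw [opt_lt hba han hlt] at hopt
      rcases hopt with (⟨x, hx1, hx2, rfl⟩ | ⟨x, hx, rfl⟩) | ⟨x, hx, rfl⟩
      · exact ⟨x, b, by omega, by omega, by omega, rfl⟩
      · exact ⟨a, x, by omega, by omega, by omega, rfl⟩
      · exact ⟨b - 1, x, by omega, by omega, by omega, rfl⟩
    · have hgt : 2 * n' < a + b := by omega
      have hopt : _ ∈ Opt 2 (2 * n') (tworow a b) := hmove
      rw [opt_gt hba han hgt] at hopt
      rcases hopt with ⟨hOH, hnS⟩ | hpt
      · rcases hOH with (⟨x, hx1, hx2, rfl⟩ | ⟨x, hx, rfl⟩) | ⟨x, hx, rfl⟩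
        · exact ⟨x, b, by omega, by omega,
            fun hc => hnS ⟨x, b, by omega, hc, rfl⟩, rfl⟩
        · exact ⟨a, x, by omega, by omega,
            fun hc => hnS ⟨a, x, by omega, hc, rfl⟩, rfl⟩
        · exact ⟨b - 1, x, by omega, by omega,
            fun hc => hnS ⟨b - 1, x, by omega, hc, rfl⟩, rfl⟩
      · rw [Set.mem_singleton_iff] at hpt
        exact ⟨2 * n' - b, 2 * n' - a, by omega, by omega, by omega, hpt⟩

lemma reach_all {n' : ℕ} (hn' : 1 ≤ n') {a b : ℕ} (hba : b ≤ a) (han : a ≤ 2 * n')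
    (hs : a + b ≠ 2 * n') : Reach 2 (2 * n') (tworow a b) := by
  have hN : 2 ≤ 2 * n' := by omega
  unfold Reach
  rw [rect_eq_tworow]
  have mstep : ∀ Y' : Finset (ℕ × ℕ), ∀ l1 l2 : ℕ, l2 ≤ l1 → l1 ≤ 2 * n' → 2 * n' < l1 + l2 →
      Y' ∈ (OH l1 l2 \ {Y | ∃ a b : ℕ, b ≤ a ∧ a + b = 2 * n' ∧ Y = tworow a b}) ∪
        {tworow (2 * n' - l2) (2 * n' - l1)} → Move 2 (2 * n') (tworow l1 l2) Y' := by
    intro Y' l1 l2 h1 h2 h3 hY'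
    have : Y' ∈ Opt 2 (2 * n') (tworow l1 l2) := by
      rw [opt_gt h1 h2 h3]; exact hY'
    exact this
  have mstep' : ∀ Y' : Finset (ℕ × ℕ), ∀ l1 l2 : ℕ, l2 ≤ l1 → l1 ≤ 2 * n' →
      l1 + l2 < 2 * n' → Y' ∈ OH l1 l2 → Move 2 (2 * n') (tworow l1 l2) Y' := by
    intro Y' l1 l2 h1 h2 h3 hY'
    have : Y' ∈ Opt 2 (2 * n') (tworow l1 l2) := by
      rw [opt_lt h1 h2 h3]; exact hY'
    exact this
  by_cases haN : a = 2 * n'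
  · subst haN
    by_cases hbN : b = 2 * n'
    · subst hbN; exact Relation.ReflTransGen.refl
    · refine Relation.ReflTransGen.single (mstep _ _ _ le_rfl le_rfl (by omega) ?_)
      left
      refine ⟨Or.inl (Or.inr ⟨b, by omega, rfl⟩), ?_⟩
      rintro ⟨a', b', hba', hs', hEq⟩
      obtain ⟨h1, h2⟩ := tworow_inj hba hba' hEq
      omega
  · -- a < 2 * n'
    have haN' : a < 2 * n' := by omega
    rcases Nat.eq_zero_or_pos b with hb0 | hb1
    · subst hb0
      rcases Nat.eq_zero_or_pos a with ha0 | ha1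
      · subst ha0
        refine Relation.ReflTransGen.single (mstep _ _ _ le_rfl le_rfl (by omega) ?_)
        right
        rw [Set.mem_singleton_iff]
        congr 1 <;> omega
      · by_cases haE : a + 1 = 2 * n'
        · refine Relation.ReflTransGen.single (mstep _ _ _ le_rfl le_rfl (by omega) ?_)
          left
          refine ⟨Or.inr ⟨0, by omega, by rw [show 2 * n' - 1 = a by omega]⟩, ?_⟩
          rintro ⟨a', b', hba', hs', hEq⟩
          obtain ⟨h1, h2⟩ := tworow_inj hba hba' hEq
          omega
        · -- path (N,N) -> (N,1) -> (a,1) -> (a,0)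
          have s1 : Move 2 (2 * n') (tworow (2 * n') (2 * n')) (tworow (2 * n') 1) := by
            apply mstep _ _ _ le_rfl le_rfl (by omega)
            left
            refine ⟨Or.inl (Or.inr ⟨1, by omega, rfl⟩), ?_⟩
            rintro ⟨a', b', hba', hs', hEq⟩
            obtain ⟨h1, h2⟩ := tworow_inj (by omega) hba' hEq
            omega
          have s2 : Move 2 (2 * n') (tworow (2 * n') 1) (tworow a 1) := by
            apply mstep _ _ _ (by omega) le_rfl (by omega)
            left
            refine ⟨Or.inl (Or.inl ⟨a, by omega, by omega, rfl⟩), ?_⟩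
            rintro ⟨a', b', hba', hs', hEq⟩
            obtain ⟨h1, h2⟩ := tworow_inj (by omega) hba' hEq
            omega
          have s3 : Move 2 (2 * n') (tworow a 1) (tworow a 0) := by
            apply mstep' _ _ _ (by omega) (by omega) (by omega)
            exact Or.inl (Or.inr ⟨0, by omega, rfl⟩)
          exact Relation.ReflTransGen.tail
            (Relation.ReflTransGen.tail (Relation.ReflTransGen.single s1) s2) s3
    · -- b ≥ 1
      have s1 : Move 2 (2 * n') (tworow (2 * n') (2 * n')) (tworow (2 * n') b) := by
        apply mstep _ _ _ le_rfl le_rfl (by omega)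
        left
        refine ⟨Or.inl (Or.inr ⟨b, by omega, rfl⟩), ?_⟩
        rintro ⟨a', b', hba', hs', hEq⟩
        obtain ⟨h1, h2⟩ := tworow_inj (by omega) hba' hEq
        omega
      have s2 : Move 2 (2 * n') (tworow (2 * n') b) (tworow a b) := by
        apply mstep _ _ _ (by omega) le_rfl (by omega)
        left
        refine ⟨Or.inl (Or.inl ⟨a, by omega, by omega, rfl⟩), ?_⟩
        rintro ⟨a', b', hba', hs', hEq⟩
        obtain ⟨h1, h2⟩ := tworow_inj (by omega) hba' hEq
        omega
      exact Relation.ReflTransGen.tail (Relation.ReflTransGen.single s1) s2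

end AuxMHRG

theorem stmt13 (n' : ℕ) (hn' : 1 ≤ n') :
    ({Y : Finset (ℕ × ℕ) | Reach 2 (2 * n') Y} =
      {Y | IsYD Y ∧ Y ⊆ rect 2 (2 * n')} \
        {Y | ∃ a b : ℕ, b ≤ a ∧ a + b = 2 * n' ∧ Y = tworow a b}) ∧
    (∀ l1 l2 : ℕ, l2 ≤ l1 → l1 ≤ 2 * n' →
      (l1 + l2 < 2 * n' → Opt 2 (2 * n') (tworow l1 l2) = OH l1 l2) ∧
      (2 * n' < l1 + l2 → Opt 2 (2 * n') (tworow l1 l2) =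
        (OH l1 l2 \ {Y | ∃ a b : ℕ, b ≤ a ∧ a + b = 2 * n' ∧ Y = tworow a b}) ∪
          {tworow (2 * n' - l2) (2 * n' - l1)})) := by
  constructor
  · ext Y
    simp only [Set.mem_setOf_eq, Set.mem_diff]
    constructor
    · intro h
      obtain ⟨a, b, hba, han, hs, rfl⟩ := reach_invariant hn' h
      refine ⟨⟨isYD_tworow hba, tworow_subset_rect han (le_trans hba han)⟩, ?_⟩
      rintro ⟨a', b', hba', hs', hEq⟩
      obtain ⟨h1, h2⟩ := tworow_inj hba hba' hEq
      omega
    · rintro ⟨⟨hYD, hsub⟩, hnS⟩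
      obtain ⟨a, b, hba, han, rfl⟩ := yd_eq_tworow hYD hsub
      exact reach_all hn' hba han (fun hc => hnS ⟨a, b, hba, hc, rfl⟩)
  · intro l1 l2 h21 h1n
    exact ⟨fun h => opt_lt h21 h1n h, fun h => opt_gt h21 h1n h⟩
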